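/- The piecewise function f^∞(x) = (m₁/√(2πσ²))·exp(-(x - x₀)²/(2σ²)) for |x - x₀| ≥ δ and f^∞(x) = m₂/(2δ) for |x - x₀| < δ, with (m₁, m₂) solving the continuity-and-mass system, satisfies the stationary equation (x - x₀)f^∞(x) + d/dx(κ(x)f^∞(x)) = 0 for all x with |x - x₀| ≠ δ, where κ(x) = σ² + δ²/2 - (x - x₀)²/2 for |x - x₀| < δ and κ(x) = σ² otherwise. -/

import Mathlib

open Real

/-- The nonconstant diffusion function of the surrogate Fokker-Planck equation. -/
noncomputable def kappa (σ δ x₀ : ℝ) (x : ℝ) : ℝ :=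
  if |x - x₀| < δ then σ^2 + δ^2/2 - (x - x₀)^2/2 else σ^2

/-- The piecewise Gaussian-uniform steady profile. -/
noncomputable def finf (σ δ x₀ m₁ m₂ : ℝ) (x : ℝ) : ℝ :=
  if |x - x₀| < δ then m₂ / (2 * δ)
  else (m₁ / Real.sqrt (2 * π * σ^2)) * Real.exp (-(x - x₀)^2 / (2 * σ^2))

theorem stmt12 (σ δ x₀ m₁ m₂ : ℝ) (hσ : 0 < σ) (hδ : 0 < δ)
    (hm₁ : 0 < m₁) (hm₂ : 0 < m₂)
    (hcont : (m₁ / Real.sqrt (2 * π * σ^2)) * Real.exp (-δ^2 / (2 * σ^2)) = m₂ / (2 * δ)) :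
    ∀ x : ℝ, |x - x₀| ≠ δ →
      (x - x₀) * finf σ δ x₀ m₁ m₂ x
        + deriv (fun y => kappa σ δ x₀ y * finf σ δ x₀ m₁ m₂ y) x = 0 := by
  intro x hx
  rcases lt_or_gt_of_ne hx with hlt | hgt
  · -- inside: f = m₂/(2δ), κ f = (σ²+δ²/2-(y-x₀)²/2)·m₂/(2δ)
    have hopen : {y : ℝ | |y - x₀| < δ} ∈ nhds x := by
      have : IsOpen {y : ℝ | |y - x₀| < δ} := by
        have : Continuous fun y : ℝ => |y - x₀| := (continuous_id.sub continuous_const).abs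
        exact isOpen_lt this continuous_const
      exact this.mem_nhds hlt
    have heq : (fun y => kappa σ δ x₀ y * finf σ δ x₀ m₁ m₂ y)
        =ᶠ[nhds x] (fun y => (σ^2 + δ^2/2 - (y - x₀)^2/2) * (m₂ / (2*δ))) := by
      filter_upwards [hopen] with y hy
      simp [kappa, finf, hy]
    have hd : HasDerivAt (fun y => (σ^2 + δ^2/2 - (y - x₀)^2/2) * (m₂ / (2*δ)))
        (-(x - x₀) * (m₂ / (2*δ))) x := by
      have h1 : HasDerivAt (fun y : ℝ => y - x₀) 1 x := (hasDerivAt_id x).sub_const x₀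
      have h2 : HasDerivAt (fun y : ℝ => (y - x₀)^2) (2 * (x - x₀)) x := by
        have := h1.fun_pow 2
        simpa using this
      have h3 : HasDerivAt (fun y : ℝ => σ^2 + δ^2/2 - (y - x₀)^2/2) (-(x - x₀)) x := by
        have := (HasDerivAt.const_sub (σ^2 + δ^2/2) (h2.div_const 2))
        rw [show -(2 * (x - x₀) / 2) = -(x - x₀) by ring] at this
        exact this
      exact h3.mul_const _
    rw [heq.deriv_eq, hd.deriv]
    simp [finf, hlt]
    ring
  · -- outside
    have hopen : {y : ℝ | δ < |y - x₀|} ∈ nhds x := by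
      have : IsOpen {y : ℝ | δ < |y - x₀|} := by
        have : Continuous fun y : ℝ => |y - x₀| := (continuous_id.sub continuous_const).abs
        exact isOpen_lt continuous_const this
      exact this.mem_nhds hgt
    set c := m₁ / Real.sqrt (2 * π * σ^2) with hc
    have heq : (fun y => kappa σ δ x₀ y * finf σ δ x₀ m₁ m₂ y)
        =ᶠ[nhds x] (fun y => σ^2 * (c * Real.exp (-(y - x₀)^2 / (2 * σ^2)))) := by
      filter_upwards [hopen] with y hy
      have : ¬ |y - x₀| < δ := not_lt.mpr hy.le
      simp [kappa, finf, this]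
      exact Or.inl rfl
    have hσ2 : (σ:ℝ)^2 ≠ 0 := pow_ne_zero 2 hσ.ne'
    have h1 : HasDerivAt (fun y : ℝ => y - x₀) 1 x := (hasDerivAt_id x).sub_const x₀
    have h2 : HasDerivAt (fun y : ℝ => (y - x₀)^2) (2 * (x - x₀)) x := by
      have := h1.fun_pow 2; simpa using this
    have h3 : HasDerivAt (fun y : ℝ => -(y - x₀)^2 / (2 * σ^2))
        (-(2 * (x - x₀)) / (2 * σ^2)) x := (h2.neg).div_const _
    have h4 : HasDerivAt (fun y : ℝ => Real.exp (-(y - x₀)^2 / (2 * σ^2)))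
        (Real.exp (-(x - x₀)^2 / (2 * σ^2)) * (-(2 * (x - x₀)) / (2 * σ^2))) x := h3.exp
    have h5 : HasDerivAt (fun y : ℝ => σ^2 * (c * Real.exp (-(y - x₀)^2 / (2 * σ^2))))
        (σ^2 * (c * (Real.exp (-(x - x₀)^2 / (2 * σ^2)) * (-(2 * (x - x₀)) / (2 * σ^2))))) x :=
      (h4.const_mul c).const_mul (σ^2)
    rw [heq.deriv_eq, h5.deriv]
    have hnlt : ¬ |x - x₀| < δ := not_lt.mpr hgt.le
    simp only [finf, hnlt, if_false]
    rw [← hc]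
    have h6 : σ^2 * (-(2 * (x - x₀)) / (2 * σ^2)) = -(x - x₀) := by
      field_simp
    linear_combination (c * Real.exp (-(x - x₀)^2 / (2 * σ^2))) * h6
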